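/- Let L be a complete algebraic lattice with bottom 0 and K(L) its set of compact elements. Then ⟨K(L), ≤, ∨, 0⟩ is a dually integral Abelian pomonoid, and there is a bijective correspondence between finitary Galatos–Tsinakis consequence relations on L and deductive relations on ⟨K(L), ≤, ∨, 0⟩. -/

import Mathlib

open CompleteLattice

/-- The (old Mathlib) notion of a compact element of a complete lattice. -/
def CompleteLattice.IsCompactElement {α : Type*} [CompleteLattice α] (k : α) : Prop :=
  ∀ s : Set α, k ≤ sSup s → ∃ t : Finset α, ↑t ⊆ s ∧ k ≤ t.sup id

/-- The compact elements of a complete lattice `L`, as a type. -/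
def KOf (L : Type*) [CompleteLattice L] : Type _ :=
  {x : L // CompleteLattice.IsCompactElement x}

instance (L : Type*) [CompleteLattice L] : PartialOrder (KOf L) :=
  Subtype.partialOrder _

/-- The join of two compact elements is compact. -/
noncomputable def Ksup {L : Type*} [CompleteLattice L] (a b : KOf L) : KOf L :=
  ⟨a.1 ⊔ b.1, by
    classical
    intro s hs
    obtain ⟨t₁, ht₁, h₁⟩ := a.2 s (le_trans le_sup_left hs)
    obtain ⟨t₂, ht₂, h₂⟩ := b.2 s (le_trans le_sup_right hs)
    refine ⟨t₁ ∪ t₂, ?_, ?_⟩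
    · rw [Finset.coe_union]
      exact Set.union_subset ht₁ ht₂
    · exact sup_le (h₁.trans (Finset.sup_mono Finset.subset_union_left))
        (h₂.trans (Finset.sup_mono Finset.subset_union_right))⟩

/-- The bottom element is compact. -/
def Kbot (L : Type*) [CompleteLattice L] : KOf L :=
  ⟨⊥, fun s _ => ⟨∅, by simp⟩⟩

/-- Finitary Galatos–Tsinakis consequence relations on a complete lattice. -/
def IsFinGTCR {L : Type*} [CompleteLattice L] (r : L → L → Prop) : Prop :=
  (∀ x, r x x) ∧ (∀ x y z, r x y → r y z → r x z) ∧
  (∀ x y, y ≤ x → r x y) ∧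
  (∀ x, r x (sSup {y : L | r x y})) ∧
  (∀ a b, CompleteLattice.IsCompactElement b → r a b →
    ∃ a' : L, CompleteLattice.IsCompactElement a' ∧ a' ≤ a ∧ r a' b)

/-- Deductive relations on the pomonoid of compact elements `⟨K(L), ≤, ∨, ⊥⟩`. -/
def IsDRK {L : Type*} [CompleteLattice L] (r : KOf L → KOf L → Prop) : Prop :=
  (∀ a b : KOf L, a ≤ b → r b a) ∧
  (∀ a b c : KOf L, r a b → r b c → r a c) ∧
  (∀ a b c : KOf L, r a b → r (Ksup a c) (Ksup b c))

section Aux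

variable {L : Type*} [CompleteLattice L]

theorem KOf.le_def {a b : KOf L} : a ≤ b ↔ a.1 ≤ b.1 := Iff.rfl

theorem Ksup_comm' (a b : KOf L) : Ksup a b = Ksup b a := Subtype.ext (sup_comm _ _)

variable {s : KOf L → KOf L → Prop}

theorem DRK.refl (hs : IsDRK s) (a : KOf L) : s a a := hs.1 a a le_rfl

theorem DRK.down (hs : IsDRK s) {a b c : KOf L} (h : s a b) (hc : c ≤ b) : s a c :=
  hs.2.1 a b c h (hs.1 c b hc)

theorem DRK.up (hs : IsDRK s) {a a' b : KOf L} (h : a ≤ a') (hab : s a b) : s a' b :=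
  hs.2.1 a' a b (hs.1 a a' h) hab

theorem DRK.join (hs : IsDRK s) {a₁ a₂ b₁ b₂ : KOf L} (h1 : s a₁ b₁) (h2 : s a₂ b₂) :
    s (Ksup a₁ a₂) (Ksup b₁ b₂) := by
  have step1 : s (Ksup a₁ a₂) (Ksup b₁ a₂) := hs.2.2 a₁ b₁ a₂ h1
  have step2 : s (Ksup a₂ b₁) (Ksup b₂ b₁) := hs.2.2 a₂ b₂ b₁ h2
  rw [Ksup_comm' a₂ b₁, Ksup_comm' b₂ b₁] at step2
  exact hs.2.1 _ _ _ step1 step2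

/-- The map from GTCRs to deductive relations: restriction to compact elements. -/
def Fmap (r : L → L → Prop) : KOf L → KOf L → Prop := fun a b => r a.1 b.1

/-- The map from deductive relations to GTCRs. -/
def Gmap (s : KOf L → KOf L → Prop) : L → L → Prop := fun x y =>
  ∀ b : KOf L, b.1 ≤ y → ∃ a : KOf L, a.1 ≤ x ∧ s a b

theorem Fmap_isDRK {r : L → L → Prop} (hr : IsFinGTCR r) : IsDRK (Fmap r) := by
  obtain ⟨hrefl, htrans, hini, hsSup, hfin⟩ := hr
  refine ⟨fun a b h => hini _ _ h, fun a b c h1 h2 => htrans _ _ _ h1 h2, ?_⟩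
  intro a b c h
  have h1 : r (a.1 ⊔ c.1) b.1 := htrans _ _ _ (hini _ _ le_sup_left) h
  have h2 : r (a.1 ⊔ c.1) c.1 := hini _ _ le_sup_right
  have h3 : r (a.1 ⊔ c.1) (sSup {y : L | r (a.1 ⊔ c.1) y}) := hsSup _
  have h4 : b.1 ⊔ c.1 ≤ sSup {y : L | r (a.1 ⊔ c.1) y} :=
    sup_le (le_sSup h1) (le_sSup h2)
  exact htrans _ _ _ h3 (hini _ _ h4)

theorem Gmap_isFinGTCR (hs : IsDRK s) [IsCompactlyGenerated L] : IsFinGTCR (Gmap s) := by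
  classical
  refine ⟨?_, ?_, ?_, ?_, ?_⟩
  · intro x b hb
    exact ⟨b, hb, DRK.refl hs b⟩
  · intro x y z h1 h2 c hc
    obtain ⟨b, hb, hbc⟩ := h2 c hc
    obtain ⟨a, ha, hab⟩ := h1 b hb
    exact ⟨a, ha, hs.2.1 a b c hab hbc⟩
  · intro x y hyx b hb
    exact ⟨b, hb.trans hyx, DRK.refl hs b⟩
  · intro x b hb
    set S : Set L := {y : L | Gmap s x y} with hS
    set T : Set L := ⋃ y ∈ S, {c : L | CompleteLattice.IsCompactElement c ∧ c ≤ y} with hT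
    have hST : sSup S ≤ sSup T := by
      refine sSup_le fun y hy => ?_
      conv_lhs => rw [← sSup_compact_le_eq y]
      exact sSup_le_sSup fun c hc => Set.mem_biUnion hy ⟨(CompleteLattice.isCompactElement_iff_exists_le_sSup_of_le_sSup (α := L) _).mp hc.1, hc.2⟩
    obtain ⟨t, htT, hbt⟩ := b.2 T (hb.trans hST)
    -- main finite-join induction
    have key : ∀ t : Finset L, ↑t ⊆ T →
        ∃ a c : KOf L, a.1 ≤ x ∧ c.1 = t.sup id ∧ s a c := by
      intro t
      induction t using Finset.induction_on with
      | empty =>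
        intro _
        exact ⟨Kbot L, Kbot L, bot_le, by simp [Kbot], DRK.refl hs _⟩
      | @insert z t hz ih =>
        intro hsub
        have hzT : z ∈ T := hsub (by simp)
        rw [hT] at hzT
        obtain ⟨y, hyS, hzc, hzy⟩ := Set.mem_iUnion₂.mp hzT
        obtain ⟨a₁, ha₁, ha₁z⟩ := hyS ⟨z, hzc⟩ hzy
        obtain ⟨a₂, c₂, ha₂, hc₂, hsc₂⟩ := ih (fun w hw => hsub (by simp [hw]))
        refine ⟨Ksup a₁ a₂, Ksup ⟨z, hzc⟩ c₂, sup_le ha₁ ha₂, ?_, DRK.join hs ha₁z hsc₂⟩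
        show z ⊔ c₂.1 = (insert z t).sup id
        rw [Finset.sup_insert, hc₂]
        rfl
    obtain ⟨a, c, hax, hc, hsc⟩ := key t htT
    refine ⟨a, hax, DRK.down hs hsc ?_⟩
    show b.1 ≤ c.1
    rw [hc]; exact hbt
  · intro a b hb hab
    obtain ⟨a', ha', hsa'⟩ := hab ⟨b, hb⟩ le_rfl
    refine ⟨a'.1, a'.2, ha', ?_⟩
    intro c hc
    exact ⟨a', le_rfl, DRK.down hs hsa' hc⟩

theorem Fmap_Gmap (hs : IsDRK s) : Fmap (Gmap s) = s := by
  funext a b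
  apply propext
  constructor
  · intro h
    obtain ⟨a', ha', hsa'⟩ := h b le_rfl
    exact DRK.up hs (show a' ≤ a from ha') hsa'
  · intro h c hc
    exact ⟨a, le_rfl, DRK.down hs h hc⟩

theorem Gmap_Fmap {r : L → L → Prop} (hr : IsFinGTCR r) [IsCompactlyGenerated L] :
    Gmap (Fmap r) = r := by
  obtain ⟨hrefl, htrans, hini, hsSup, hfin⟩ := hr
  funext x y
  apply propext
  constructor
  · intro h
    have hall : ∀ c ∈ {c : L | CompleteLattice.IsCompactElement c ∧ c ≤ y}, r x c := by
      rintro c ⟨hc, hcy⟩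
      obtain ⟨a, hax, hac⟩ := h ⟨c, hc⟩ hcy
      exact htrans _ _ _ (hini _ _ hax) hac
    have hy : y ≤ sSup {z : L | r x z} := by
      conv_lhs => rw [← sSup_compact_le_eq y]
      exact sSup_le fun c hc => le_sSup (hall c ⟨(CompleteLattice.isCompactElement_iff_exists_le_sSup_of_le_sSup (α := L) _).mp hc.1, hc.2⟩)
    exact htrans _ _ _ (hsSup x) (hini _ _ hy)
  · intro h b hb
    have hxb : r x b.1 := htrans _ _ _ h (hini _ _ hb)
    obtain ⟨a', ha'c, ha'x, ha'b⟩ := hfin x b.1 b.2 hxb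
    exact ⟨⟨a', ha'c⟩, ha'x, ha'b⟩

end Aux

/-- In a complete algebraic lattice `L`, the compact elements form a dually integral
Abelian pomonoid `⟨K(L), ≤, ∨, ⊥⟩`, and there is a bijective correspondence between
finitary Galatos–Tsinakis consequence relations on `L` and deductive relations
on `K(L)`. -/
theorem compact_elements_pomonoid_and_bijection
    (L : Type*) [CompleteLattice L] [IsCompactlyGenerated L] :
    -- ⟨K(L), ≤, ∨, ⊥⟩ is a dually integral Abelian pomonoid
    ((∀ a b c : KOf L, Ksup (Ksup a b) c = Ksup a (Ksup b c)) ∧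
     (∀ a b : KOf L, Ksup a b = Ksup b a) ∧
     (∀ a : KOf L, Ksup a (Kbot L) = a) ∧
     (∀ a b c : KOf L, a ≤ b → Ksup a c ≤ Ksup b c) ∧
     (∀ a : KOf L, Kbot L ≤ a)) ∧
    -- bijective correspondence
    Nonempty
      ({r : L → L → Prop // IsFinGTCR r} ≃ {r : KOf L → KOf L → Prop // IsDRK r}) := by
  
  refine ⟨⟨fun a b c => Subtype.ext (sup_assoc _ _ _),
    fun a b => Subtype.ext (sup_comm _ _),
    fun a => Subtype.ext (sup_bot_eq _),
    fun a b c h => sup_le_sup_right h _,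
    fun a => bot_le⟩, ?_⟩
  exact ⟨{ toFun := fun r => ⟨Fmap r.1, Fmap_isDRK r.2⟩,
           invFun := fun s => ⟨Gmap s.1, Gmap_isFinGTCR s.2⟩,
           left_inv := fun r => Subtype.ext (Gmap_Fmap r.2),
           right_inv := fun s => Subtype.ext (Fmap_Gmap s.2) }⟩
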